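/- arXiv:1404.4032 — 2 statements merged into one kernel-verified Lean document; each statement's English description precedes it below -/
import Mathlib

section
/- Let X = L₀ + S₀ with S₀ supported on Ω, and let A satisfy P_{U_A}(U₀) = U₀ (the column space of L₀ is contained in that of A) and U_A ∩ Ω = {0} (no nonzero matrix in the range of P_{U_A} is supported on Ω). Let UΣVᵀ be the skinny SVD of A⁺L₀. If there exists a matrix F with (a) UVᵀ = λAᵀ(sign(S₀)+F), (b) P_Ω(F) = 0, and (c) ‖P_{Ω^⊥}(F)‖_∞ < 1, then (Z,S) = (A⁺L₀, S₀) is the unique optimal solution of the convex program min_{Z,S} ‖Z‖_* + λ‖S‖_1 subject to X = AZ + S. -/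
open Matrix

/-- The nuclear norm of a real matrix: the sum of its singular values. -/
noncomputable def nucNorm {m n : ℕ} (M : Matrix (Fin m) (Fin n) ℝ) : ℝ :=
  ∑ j, Real.sqrt ((show (Mᵀ * M).IsHermitian by
    simpa using Matrix.isHermitian_conjTranspose_mul_self M).eigenvalues j)

/-- The entrywise ℓ1 norm of a real matrix. -/
noncomputable def l1Norm {m n : ℕ} (M : Matrix (Fin m) (Fin n) ℝ) : ℝ :=
  ∑ i, ∑ j, |M i j|

namespace LRR
variable {m n : ℕ}
lemma star_eq_transpose (M : Matrix (Fin m) (Fin n) ℝ) : Mᴴ = Mᵀ := by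
  ext i j; simp [conjTranspose_apply]
noncomputable def Qm (M : Matrix (Fin m) (Fin n) ℝ) : Matrix (Fin n) (Fin n) ℝ :=
  ((show (Mᵀ * M).IsHermitian by
    simpa using Matrix.isHermitian_conjTranspose_mul_self M).eigenvectorUnitary : Matrix (Fin n) (Fin n) ℝ)
noncomputable def dd (M : Matrix (Fin m) (Fin n) ℝ) : Fin n → ℝ :=
  (show (Mᵀ * M).IsHermitian by
    simpa using Matrix.isHermitian_conjTranspose_mul_self M).eigenvalues
lemma spectral (M : Matrix (Fin m) (Fin n) ℝ) :
    Mᵀ * M = Qm M * diagonal (dd M) * (Qm M)ᵀ := by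
  have h := (show (Mᵀ * M).IsHermitian by
    simpa using Matrix.isHermitian_conjTranspose_mul_self M).spectral_theorem
  rw [← star_eq_transpose M, ← star_eq_transpose (Qm M)]
  simpa [Qm, dd, Matrix.star_eq_conjTranspose] using h
lemma dd_nonneg (M : Matrix (Fin m) (Fin n) ℝ) (j : Fin n) : 0 ≤ dd M j :=
  (show (Mᵀ * M).PosSemidef by
    simpa using Matrix.posSemidef_conjTranspose_mul_self M).eigenvalues_nonneg j
lemma Qm_orth (M : Matrix (Fin m) (Fin n) ℝ) : (Qm M)ᵀ * Qm M = 1 := by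
  have := ((show (Mᵀ * M).IsHermitian by
    simpa using Matrix.isHermitian_conjTranspose_mul_self M).eigenvectorUnitary).2.1
  rw [← star_eq_transpose]; exact this
lemma Qm_orth' (M : Matrix (Fin m) (Fin n) ℝ) : Qm M * (Qm M)ᵀ = 1 := by
  have := ((show (Mᵀ * M).IsHermitian by
    simpa using Matrix.isHermitian_conjTranspose_mul_self M).eigenvectorUnitary).2.2
  rw [← star_eq_transpose]; exact this
lemma conj_Q (M : Matrix (Fin m) (Fin n) ℝ) :
    (Qm M)ᵀ * (Mᵀ * M) * Qm M = diagonal (dd M) := by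
  rw [spectral M, Matrix.mul_assoc, Matrix.mul_assoc, Qm_orth, Matrix.mul_one,
    ← Matrix.mul_assoc, Qm_orth, Matrix.one_mul]
lemma nucNorm_eq_sum_dd (M : Matrix (Fin m) (Fin n) ℝ) :
    nucNorm M = ∑ j, Real.sqrt (dd M j) := rfl

lemma psd_diag_nonneg {N : Matrix (Fin n) (Fin n) ℝ} (h : N.PosSemidef) (j : Fin n) :
    0 ≤ N j j := by
  exact h.diag_nonneg

/-- entrywise inner product -/
def ip (A B : Matrix (Fin m) (Fin n) ℝ) : ℝ := ∑ p : Fin m × Fin n, A p.1 p.2 * B p.1 p.2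

lemma ip_eq_trace (A B : Matrix (Fin m) (Fin n) ℝ) : ip A B = Matrix.trace (Aᵀ * B) := by
  rw [ip, Matrix.trace, Fintype.sum_prod_type]
  rw [Finset.sum_comm]
  simp [Matrix.mul_apply, Matrix.diag]

lemma dual_le (Y M : Matrix (Fin m) (Fin n) ℝ) (hY : (1 - Yᵀ * Y).PosSemidef) :
    ip Y M ≤ nucNorm M := by
  obtain ⟨Q, hQ⟩ : ∃ Q, Q = Qm M := ⟨_, rfl⟩
  have ho : Qᵀ * Q = 1 := by rw [hQ]; exact Qm_orth M
  have ho' : Q * Qᵀ = 1 := by rw [hQ]; exact Qm_orth' M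
  have hcq : Qᵀ * (Mᵀ * M) * Q = diagonal (dd M) := by rw [hQ]; exact conj_Q M
  have hmat : (Y * Q)ᵀ * (M * Q) = Qᵀ * (Yᵀ * M * Q) := by
    rw [Matrix.transpose_mul]; simp only [Matrix.mul_assoc]
  have e1 : ip Y M = ∑ j, ((Y * Q)ᵀ * (M * Q)) j j := by
    rw [ip_eq_trace]
    calc Matrix.trace (Yᵀ * M) = Matrix.trace (Yᵀ * M * (Q * Qᵀ)) := by
          rw [ho', Matrix.mul_one]
      _ = Matrix.trace (Yᵀ * M * Q * Qᵀ) := by simp only [Matrix.mul_assoc]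
      _ = Matrix.trace (Qᵀ * (Yᵀ * M * Q)) := (Matrix.trace_mul_comm _ _).symm
      _ = ∑ j, ((Y * Q)ᵀ * (M * Q)) j j := by
          rw [← hmat]; simp [Matrix.trace, Matrix.diag]
  rw [e1, nucNorm_eq_sum_dd]
  apply Finset.sum_le_sum
  intro j _
  have hdiag : ((Y * Q)ᵀ * (M * Q)) j j = ∑ i, (Y * Q) i j * (M * Q) i j := by
    simp [Matrix.mul_apply, mul_comm]
  have hMcol : ∑ i, (M * Q) i j ^ 2 = dd M j := by
    have h1 : (M * Q)ᵀ * (M * Q) = diagonal (dd M) := by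
      rw [Matrix.transpose_mul, ← hcq]; simp only [Matrix.mul_assoc]
    have h2 : ((M * Q)ᵀ * (M * Q)) j j = dd M j := by rw [h1]; simp
    rw [← h2]; simp [Matrix.mul_apply, sq, mul_comm]
  have hYcol : ∑ i, (Y * Q) i j ^ 2 ≤ 1 := by
    have hpsd := hY.conjTranspose_mul_mul_same Q
    rw [star_eq_transpose] at hpsd
    have h0 := psd_diag_nonneg hpsd j
    have hm : Qᵀ * (1 - Yᵀ * Y) * Q = 1 - (Y * Q)ᵀ * (Y * Q) := by
      rw [Matrix.mul_sub, Matrix.mul_one, Matrix.sub_mul, ho, Matrix.transpose_mul]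
      simp only [Matrix.mul_assoc]
    rw [hm] at h0
    have h2 : ((Y * Q)ᵀ * (Y * Q)) j j = ∑ i, (Y * Q) i j ^ 2 := by
      simp [Matrix.mul_apply, sq, mul_comm]
    have h3 : ((1 : Matrix (Fin n) (Fin n) ℝ) - (Y * Q)ᵀ * (Y * Q)) j j
        = 1 - ((Y * Q)ᵀ * (Y * Q)) j j := by simp [Matrix.sub_apply]
    rw [h3, h2] at h0
    linarith
  have hb : (∑ i, (Y * Q) i j ^ 2) * (∑ i, (M * Q) i j ^ 2) ≤ dd M j := by
    calc (∑ i, (Y * Q) i j ^ 2) * (∑ i, (M * Q) i j ^ 2)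
        ≤ 1 * (∑ i, (M * Q) i j ^ 2) :=
          mul_le_mul_of_nonneg_right hYcol (Finset.sum_nonneg fun _ _ => sq_nonneg _)
      _ = ∑ i, (M * Q) i j ^ 2 := one_mul _
      _ = dd M j := hMcol
  have cs := Finset.sum_mul_sq_le_sq_mul_sq Finset.univ
    (fun i => (Y * Q) i j) (fun i => (M * Q) i j)
  rw [hdiag]
  calc ∑ i, (Y * Q) i j * (M * Q) i j ≤ |∑ i, (Y * Q) i j * (M * Q) i j| := le_abs_self _
    _ = Real.sqrt ((∑ i, (Y * Q) i j * (M * Q) i j) ^ 2) := (Real.sqrt_sq_eq_abs _).symm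
    _ ≤ Real.sqrt ((∑ i, (Y * Q) i j ^ 2) * (∑ i, (M * Q) i j ^ 2)) := Real.sqrt_le_sqrt cs
    _ ≤ Real.sqrt (dd M j) := Real.sqrt_le_sqrt hb

lemma nucNorm_svd {r : ℕ} (U : Matrix (Fin m) (Fin r) ℝ) (V : Matrix (Fin n) (Fin r) ℝ)
    (σ : Fin r → ℝ) (hU : Uᵀ * U = 1) (hV : Vᵀ * V = 1) (hσ : ∀ i, 0 ≤ σ i) :
    nucNorm (U * diagonal σ * Vᵀ) = ∑ i, σ i := by
  obtain ⟨M, hM⟩ : ∃ M, M = U * diagonal σ * Vᵀ := ⟨_, rfl⟩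
  obtain ⟨Q, hQ⟩ : ∃ Q, Q = Qm M := ⟨_, rfl⟩
  obtain ⟨W, hW⟩ : ∃ W, W = Vᵀ * Q := ⟨_, rfl⟩
  have ho : Qᵀ * Q = 1 := by rw [hQ]; exact Qm_orth M
  have ho' : Q * Qᵀ = 1 := by rw [hQ]; exact Qm_orth' M
  have hdd2 : diagonal σ * diagonal σ = diagonal (fun i => σ i ^ 2) := by
    rw [Matrix.diagonal_mul_diagonal]; congr 1; ext i; ring
  have hMM : Mᵀ * M = V * diagonal (fun i => σ i ^ 2) * Vᵀ := by
    rw [hM]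
    simp only [Matrix.transpose_mul, Matrix.transpose_transpose, Matrix.diagonal_transpose,
      Matrix.mul_assoc]
    rw [show Uᵀ * (U * (diagonal σ * Vᵀ)) = diagonal σ * Vᵀ from by
      rw [← Matrix.mul_assoc, hU, Matrix.one_mul]]
    rw [← Matrix.mul_assoc (diagonal σ), hdd2]
  have hcq2 : Qᵀ * (Mᵀ * M) * Q = diagonal (dd M) := by rw [hQ]; exact conj_Q M
  have h1 : diagonal (fun i => σ i ^ 2) * W = W * diagonal (dd M) := by
    have e1 : Mᵀ * M * Q = Q * diagonal (dd M) := by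
      calc Mᵀ * M * Q = Q * (Qᵀ * (Mᵀ * M) * Q) := by
            simp only [← Matrix.mul_assoc]; rw [ho', Matrix.one_mul]
        _ = Q * diagonal (dd M) := by rw [hcq2]
    have e2 : Vᵀ * (Mᵀ * M * Q) = diagonal (fun i => σ i ^ 2) * W := by
      rw [hMM, hW]
      calc Vᵀ * (V * diagonal (fun i => σ i ^ 2) * Vᵀ * Q)
          = (Vᵀ * V) * (diagonal (fun i => σ i ^ 2) * (Vᵀ * Q)) := by
            simp only [Matrix.mul_assoc]
        _ = diagonal (fun i => σ i ^ 2) * (Vᵀ * Q) := by rw [hV, Matrix.one_mul]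
    rw [← e2, e1, hW]; simp only [Matrix.mul_assoc]
  have h1e : ∀ i j, σ i ^ 2 * W i j = W i j * dd M j := by
    intro i j
    have := congrFun (congrFun h1 i) j
    simpa [Matrix.diagonal_mul, Matrix.mul_diagonal] using this
  have h4 : ∀ i, ∑ j, W i j ^ 2 = 1 := by
    intro i
    have e4 : W * Wᵀ = 1 := by
      rw [hW, Matrix.transpose_mul, Matrix.transpose_transpose]
      calc Vᵀ * Q * (Qᵀ * V) = Vᵀ * (Q * Qᵀ) * V := by simp only [Matrix.mul_assoc]
        _ = 1 := by rw [ho', Matrix.mul_one, hV]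
    have := congrFun (congrFun e4 i) i
    simp only [Matrix.mul_apply, Matrix.transpose_apply, Matrix.one_apply_eq] at this
    rw [← this]
    apply Finset.sum_congr rfl; intro j _; ring
  have h3 : ∀ j, Real.sqrt (dd M j) = ∑ i, σ i * W i j ^ 2 := by
    intro j
    have hterm : ∀ i, σ i * W i j ^ 2 = Real.sqrt (dd M j) * W i j ^ 2 := by
      intro i
      by_cases hw : W i j = 0
      · rw [hw]; ring
      · have hs : σ i ^ 2 = dd M j := by
          have h := h1e i j
          exact mul_right_cancel₀ hw (by rw [h, mul_comm])
        rw [← hs, Real.sqrt_sq (hσ i)]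
    rw [Finset.sum_congr rfl (fun i _ => hterm i), ← Finset.mul_sum]
    have h5 : dd M j * (∑ i, W i j ^ 2) = dd M j := by
      have e3 : Wᵀ * (W * diagonal (dd M)) = diagonal (dd M) := by
        rw [← h1, hW, ← hcq2, hMM]
        simp only [Matrix.transpose_mul, Matrix.transpose_transpose, Matrix.mul_assoc]
      have he0 := congrFun (congrFun e3 j) j
      rw [Matrix.mul_apply] at he0
      simp only [Matrix.transpose_apply, Matrix.mul_diagonal, Matrix.diagonal_apply_eq] at he0
      rw [Finset.mul_sum]
      conv_rhs => rw [← he0]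
      apply Finset.sum_congr rfl; intro i _; ring
    by_cases hdd : dd M j = 0
    · rw [hdd]; simp
    · have h6 : (∑ i, W i j ^ 2) = 1 := mul_left_cancel₀ hdd (by rw [h5, mul_one])
      rw [h6, mul_one]
  rw [← hM, nucNorm_eq_sum_dd]
  calc ∑ j, Real.sqrt (dd M j) = ∑ j, ∑ i, σ i * W i j ^ 2 :=
        Finset.sum_congr rfl (fun j _ => h3 j)
    _ = ∑ i, ∑ j, σ i * W i j ^ 2 := Finset.sum_comm
    _ = ∑ i, σ i := by
        apply Finset.sum_congr rfl
        intro i _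
        rw [← Finset.mul_sum, h4 i, mul_one]

lemma exists_svd (H : Matrix (Fin m) (Fin n) ℝ) :
    ∃ (r' : ℕ) (U' : Matrix (Fin m) (Fin r') ℝ) (V' : Matrix (Fin n) (Fin r') ℝ)
      (σ' : Fin r' → ℝ), (∀ i, 0 < σ' i) ∧ U'ᵀ * U' = 1 ∧ V'ᵀ * V' = 1 ∧
      H = U' * diagonal σ' * V'ᵀ ∧ ∃ C : Matrix (Fin n) (Fin r') ℝ, U' = H * C := by
  classical
  obtain ⟨Q, hQ⟩ : ∃ Q, Q = Qm H := ⟨_, rfl⟩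
  have ho : Qᵀ * Q = 1 := by rw [hQ]; exact Qm_orth H
  have ho' : Q * Qᵀ = 1 := by rw [hQ]; exact Qm_orth' H
  have hcq : Qᵀ * (Hᵀ * H) * Q = diagonal (dd H) := by rw [hQ]; exact conj_Q H
  set p : Fin n → Prop := fun j => dd H j ≠ 0 with hp
  set r' : ℕ := Fintype.card {j // p j} with hr'
  set e : Fin r' ≃ {j // p j} := (Fintype.equivFin {j // p j}).symm with he
  set σ' : Fin r' → ℝ := fun k => Real.sqrt (dd H (e k)) with hσ'
  set V' : Matrix (Fin n) (Fin r') ℝ := Matrix.of (fun i k => Q i (e k)) with hV'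
  set U' : Matrix (Fin m) (Fin r') ℝ := H * (V' * diagonal (fun k => (σ' k)⁻¹)) with hU'
  have hσpos : ∀ k, 0 < σ' k := by
    intro k
    have h1 : dd H (e k) ≠ 0 := (e k).2
    have h2 : 0 ≤ dd H (e k) := dd_nonneg H _
    exact Real.sqrt_pos.mpr (lt_of_le_of_ne h2 (Ne.symm h1))
  have hσsq : ∀ k, σ' k * σ' k = dd H (e k) := fun k =>
    Real.mul_self_sqrt (dd_nonneg H _)
  have hHQ : (H * Q)ᵀ * (H * Q) = diagonal (dd H) := by
    rw [Matrix.transpose_mul, ← hcq]; simp only [Matrix.mul_assoc]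
  have hHQcol : ∀ j, ∑ i, (H * Q) i j * (H * Q) i j = dd H j := by
    intro j
    have := congrFun (congrFun hHQ j) j
    rw [Matrix.mul_apply] at this
    simp only [Matrix.transpose_apply, Matrix.diagonal_apply_eq] at this
    exact this
  have hHQzero : ∀ j, dd H j = 0 → ∀ i, (H * Q) i j = 0 := by
    intro j hj i
    have hsum := hHQcol j
    rw [hj] at hsum
    have hz := (Finset.sum_eq_zero_iff_of_nonneg
      (fun i _ => mul_self_nonneg ((H * Q) i j))).mp hsum i (Finset.mem_univ i)
    exact mul_self_eq_zero.mp hz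
  have hHV' : ∀ a k, (H * V') a k = (H * Q) a (e k) := by
    intro a k
    simp only [Matrix.mul_apply, hV', Matrix.of_apply]
  have hU'app : ∀ a k, U' a k = (H * Q) a (e k) * (σ' k)⁻¹ := by
    intro a k
    rw [hU', ← Matrix.mul_assoc, Matrix.mul_diagonal, hHV']
  have hVV : V'ᵀ * V' = 1 := by
    ext k l
    have h1 : (V'ᵀ * V') k l = (Qᵀ * Q) (e k) (e l) := by
      simp only [Matrix.mul_apply, Matrix.transpose_apply, hV', Matrix.of_apply]
    rw [h1, ho]
    by_cases hkl : k = l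
    · subst hkl; simp
    · have hne : (e k : Fin n) ≠ (e l : Fin n) := by
        intro hc
        exact hkl (e.injective (Subtype.ext hc))
      rw [Matrix.one_apply_ne hne, Matrix.one_apply_ne hkl]
  have hUU : U'ᵀ * U' = 1 := by
    ext k l
    have expand : (U'ᵀ * U') k l
        = (σ' k)⁻¹ * (σ' l)⁻¹ * (((H * Q)ᵀ * (H * Q)) (e k) (e l)) := by
      rw [Matrix.mul_apply, Matrix.mul_apply, Finset.mul_sum]
      apply Finset.sum_congr rfl
      intro a _
      simp only [Matrix.transpose_apply]
      rw [hU'app, hU'app]; ring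
    rw [expand, hHQ]
    by_cases hkl : k = l
    · subst hkl
      simp only [Matrix.diagonal_apply_eq, Matrix.one_apply_eq]
      rw [← hσsq k]
      have hσne : σ' k ≠ 0 := ne_of_gt (hσpos k)
      field_simp
    · have hne : (e k : Fin n) ≠ (e l : Fin n) := fun hc => hkl (e.injective (Subtype.ext hc))
      rw [Matrix.diagonal_apply_ne _ hne, Matrix.one_apply_ne hkl]
      ring
  have hfact : H = U' * diagonal σ' * V'ᵀ := by
    have h1 : U' * diagonal σ' = H * V' := by
      rw [hU', Matrix.mul_assoc, Matrix.mul_assoc, Matrix.diagonal_mul_diagonal]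
      have h2 : (fun k => (σ' k)⁻¹ * σ' k) = fun _ => (1:ℝ) := by
        ext k; exact inv_mul_cancel₀ (ne_of_gt (hσpos k))
      rw [h2, Matrix.diagonal_one, Matrix.mul_one]
    rw [h1]
    ext a b
    have lhs1 : (H * V' * V'ᵀ) a b = ∑ k, (H * Q) a (e k) * Q b (e k) := by
      rw [Matrix.mul_apply]
      apply Finset.sum_congr rfl
      intro k _
      rw [Matrix.transpose_apply, hHV', hV']
      rfl
    have rhs1 : H a b = ∑ j, (H * Q) a j * Q b j := by
      have h3 : H = H * Q * Qᵀ := by rw [Matrix.mul_assoc, ho', Matrix.mul_one]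
      conv_lhs => rw [h3]
      rw [Matrix.mul_apply]
      simp [Matrix.transpose_apply]
    rw [lhs1, rhs1]
    rw [show (∑ k, (H * Q) a (e k) * Q b (e k))
        = ∑ s : {j // p j}, (H * Q) a s * Q b s from
      Fintype.sum_equiv e _ _ (fun k => rfl)]
    rw [← Finset.sum_subtype (Finset.univ.filter p) (by simp)
      (fun j => (H * Q) a j * Q b j)]
    symm
    apply Finset.sum_subset (Finset.filter_subset p Finset.univ)
    intro j _ hj
    have hdd0 : dd H j = 0 := by
      by_contra hc
      exact hj (Finset.mem_filter.mpr ⟨Finset.mem_univ j, hc⟩)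
    rw [hHQzero j hdd0 a, zero_mul]
  exact ⟨r', U', V', σ', hσpos, hUU, hVV, hfact, ⟨V' * diagonal (fun k => (σ' k)⁻¹), hU'⟩⟩

lemma ip_add_left (A B C : Matrix (Fin m) (Fin n) ℝ) : ip (A + B) C = ip A C + ip B C := by
  simp [ip, add_mul, Finset.sum_add_distrib]

lemma ip_add_right (A B C : Matrix (Fin m) (Fin n) ℝ) : ip A (B + C) = ip A B + ip A C := by
  simp [ip, mul_add, Finset.sum_add_distrib]

lemma ip_smul_left (c : ℝ) (A B : Matrix (Fin m) (Fin n) ℝ) : ip (c • A) B = c * ip A B := by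
  simp [ip, Finset.mul_sum, Matrix.smul_apply, smul_eq_mul, mul_assoc]

lemma ip_factored {r : ℕ} (P : Matrix (Fin m) (Fin r) ℝ) (R : Matrix (Fin n) (Fin r) ℝ)
    (N : Matrix (Fin m) (Fin n) ℝ) : ip (P * Rᵀ) N = Matrix.trace (Pᵀ * N * R) := by
  rw [ip_eq_trace, Matrix.transpose_mul, Matrix.transpose_transpose]
  rw [Matrix.mul_assoc, Matrix.trace_mul_comm, Matrix.mul_assoc]

lemma ip_shift {a : ℕ} (A : Matrix (Fin m) (Fin a) ℝ) (N : Matrix (Fin m) (Fin n) ℝ)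
    (H : Matrix (Fin a) (Fin n) ℝ) : ip (Aᵀ * N) H = ip N (A * H) := by
  rw [ip_eq_trace, ip_eq_trace, Matrix.transpose_mul, Matrix.transpose_transpose]
  simp only [Matrix.mul_assoc]

lemma ip_svd {r : ℕ} (U : Matrix (Fin m) (Fin r) ℝ) (V : Matrix (Fin n) (Fin r) ℝ)
    (σ : Fin r → ℝ) (hU : Uᵀ * U = 1) (hV : Vᵀ * V = 1) :
    ip (U * Vᵀ) (U * diagonal σ * Vᵀ) = ∑ i, σ i := by
  rw [ip_factored]
  have h1 : Uᵀ * (U * diagonal σ * Vᵀ) * V = diagonal σ := by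
    calc Uᵀ * (U * diagonal σ * Vᵀ) * V
        = (Uᵀ * U) * diagonal σ * (Vᵀ * V) := by simp only [Matrix.mul_assoc]
      _ = diagonal σ := by rw [hU, hV, Matrix.one_mul, Matrix.mul_one]
  rw [h1, Matrix.trace_diagonal]

lemma psd_of_proj (P : Matrix (Fin n) (Fin n) ℝ) (hsym : Pᵀ = P) (hidem : P * P = P) :
    P.PosSemidef := by
  have h := Matrix.posSemidef_conjTranspose_mul_self P
  rw [star_eq_transpose, hsym, hidem] at h
  exact h

lemma psd_smul {c : ℝ} (hc : 0 ≤ c) {N : Matrix (Fin n) (Fin n) ℝ} (hN : N.PosSemidef) :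
    (c • N).PosSemidef := by
  constructor
  · have h1 := hN.1
    unfold Matrix.IsHermitian at *
    rw [Matrix.conjTranspose_smul, h1]
    simp
  · exact (hN.smul hc).2

lemma proj_psd {r : ℕ} (V : Matrix (Fin n) (Fin r) ℝ) (hV : Vᵀ * V = 1) :
    (1 - V * Vᵀ).PosSemidef := by
  apply psd_of_proj
  · rw [Matrix.transpose_sub, Matrix.transpose_one, Matrix.transpose_mul,
      Matrix.transpose_transpose]
  · rw [Matrix.sub_mul, Matrix.mul_sub, Matrix.mul_sub, Matrix.mul_one, Matrix.one_mul]
    have h1 : V * Vᵀ * (V * Vᵀ) = V * Vᵀ := by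
      calc V * Vᵀ * (V * Vᵀ) = V * (Vᵀ * V) * Vᵀ := by simp only [Matrix.mul_assoc]
        _ = V * Vᵀ := by rw [hV, Matrix.mul_one]
    rw [Matrix.mul_one, h1]
    abel

lemma uvT_mul {r s : ℕ} (U : Matrix (Fin m) (Fin r) ℝ) (V : Matrix (Fin n) (Fin r) ℝ)
    (U₂ : Matrix (Fin m) (Fin s) ℝ) (V₂ : Matrix (Fin n) (Fin s) ℝ)
    (G : Matrix (Fin r) (Fin s) ℝ) (hG : Uᵀ * U₂ = G) :
    (U * Vᵀ)ᵀ * (U₂ * V₂ᵀ) = V * G * V₂ᵀ := by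
  rw [Matrix.transpose_mul, Matrix.transpose_transpose, ← hG]
  calc V * Uᵀ * (U₂ * V₂ᵀ) = V * (Uᵀ * U₂) * V₂ᵀ := by simp only [Matrix.mul_assoc]
    _ = _ := by simp only [Matrix.mul_assoc]

lemma exists_factor {a b : ℕ} (P : Matrix (Fin m) (Fin a) ℝ) (R : Matrix (Fin m) (Fin b) ℝ)
    (h : LinearMap.range (Matrix.toLin' R) ≤ LinearMap.range (Matrix.toLin' P)) :
    ∃ C : Matrix (Fin a) (Fin b) ℝ, R = P * C := by
  have hcol : ∀ j : Fin b, ∃ v : Fin a → ℝ, P *ᵥ v = R *ᵥ Pi.single j 1 := by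
    intro j
    have : R *ᵥ Pi.single j 1 ∈ LinearMap.range (Matrix.toLin' P) := by
      apply h
      exact ⟨Pi.single j 1, Matrix.toLin'_apply R _⟩
    obtain ⟨v, hv⟩ := this
    exact ⟨v, by rw [← Matrix.toLin'_apply]; exact hv⟩
  choose v hv using hcol
  refine ⟨Matrix.of (fun k j => v j k), ?_⟩
  ext i j
  have h1 := congrFun (hv j) i
  rw [Matrix.mulVec_single] at h1
  simp only [Pi.smul_apply, Matrix.col_apply, MulOpposite.smul_eq_mul_unop,
    MulOpposite.unop_op, mul_one] at h1
  rw [Matrix.mul_apply]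
  rw [← h1]
  simp [Matrix.mulVec, dotProduct, Matrix.of_apply]

lemma sign_mul_self (a : ℝ) : Real.sign a * a = |a| := by
  rcases lt_trichotomy a 0 with h | h | h
  · rw [Real.sign_of_neg h, abs_of_neg h]; ring
  · simp [h]
  · rw [Real.sign_of_pos h, abs_of_pos h]; ring

lemma abs_sign_le_one (a : ℝ) : |Real.sign a| ≤ 1 := by
  rcases lt_trichotomy a 0 with h | h | h
  · rw [Real.sign_of_neg h]; simp
  · simp [h]
  · rw [Real.sign_of_pos h]; simp

lemma key_entry (a b : ℝ) : |a| - Real.sign a * b ≤ |a - b| := by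
  have h1 : Real.sign a * (a - b) ≤ |a - b| := by
    calc Real.sign a * (a - b) ≤ |Real.sign a * (a - b)| := le_abs_self _
      _ = |Real.sign a| * |a - b| := abs_mul _ _
      _ ≤ 1 * |a - b| := mul_le_mul_of_nonneg_right (abs_sign_le_one a) (abs_nonneg _)
      _ = |a - b| := one_mul _
  have h2 : Real.sign a * (a - b) = |a| - Real.sign a * b := by
    rw [mul_sub, sign_mul_self]
  linarith

lemma lt_sqrt_aux {x y s : ℝ} (hx : 0 ≤ x) (hy : 0 < y) (hs : 0 < s)
    (hs2 : s ^ 2 = x ^ 2 + y ^ 2) : x < s := by nlinarith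

lemma l1_prod (M : Matrix (Fin m) (Fin n) ℝ) :
    (∑ i, ∑ j, |M i j|) = ∑ p : Fin m × Fin n, |M p.1 p.2| := by
  rw [Fintype.sum_prod_type]
end LRR

set_option maxHeartbeats 1000000 in
open LRR in
/-- Dual conditions for LRR.  Let `X = L₀ + S₀` with `S₀` supported on `Ω`, let `U_A` be an
orthonormal basis of the column space of `A`, suppose the column space of `L₀` is contained
in that of `A` (`P_{U_A} L₀ = L₀`), and suppose no nonzero matrix in the range of `P_{U_A}`
is supported on `Ω`.  Let `A⁺` be the Moore–Penrose pseudoinverse of `A` and `U Σ Vᵀ` a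
skinny SVD of `A⁺L₀`.  If there exists `F` with `U Vᵀ = λ Aᵀ(sign S₀ + F)`, `P_Ω F = 0`
and `‖P_{Ω^⊥} F‖_∞ < 1`, then `(A⁺L₀, S₀)` is the unique optimal solution of
`min ‖Z‖_* + λ‖S‖₁ s.t. X = AZ + S`. -/
theorem lrr_dual_conditions (m n d r_A r : ℕ) (lam : ℝ) (hlam : 0 < lam)
    (X L₀ S₀ : Matrix (Fin m) (Fin n) ℝ) (A : Matrix (Fin m) (Fin d) ℝ)
    (Ω : Set (Fin m × Fin n))
    (hX : X = L₀ + S₀)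
    (hS₀supp : ∀ p : Fin m × Fin n, p ∉ Ω → S₀ p.1 p.2 = 0)
    (U_A : Matrix (Fin m) (Fin r_A) ℝ) (hUA : U_Aᵀ * U_A = 1)
    (hUArange : LinearMap.range (Matrix.toLin' A) = LinearMap.range (Matrix.toLin' U_A))
    (hcol : U_A * U_Aᵀ * L₀ = L₀)
    (htrans : ∀ Δ : Matrix (Fin m) (Fin n) ℝ,
        U_A * U_Aᵀ * Δ = Δ → (∀ p : Fin m × Fin n, p ∉ Ω → Δ p.1 p.2 = 0) → Δ = 0)
    (Apinv : Matrix (Fin d) (Fin m) ℝ)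
    (hp1 : A * Apinv * A = A) (hp2 : Apinv * A * Apinv = Apinv)
    (hp3 : (A * Apinv)ᵀ = A * Apinv) (hp4 : (Apinv * A)ᵀ = Apinv * A)
    (U : Matrix (Fin d) (Fin r) ℝ) (V : Matrix (Fin n) (Fin r) ℝ)
    (σ : Fin r → ℝ) (hσ : ∀ i, 0 < σ i)
    (hU : Uᵀ * U = 1) (hV : Vᵀ * V = 1)
    (hSVD : Apinv * L₀ = U * Matrix.diagonal σ * Vᵀ)
    (F : Matrix (Fin m) (Fin n) ℝ)
    (ha : U * Vᵀ = lam • (Aᵀ * (Matrix.of (fun i j => Real.sign (S₀ i j)) + F)))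
    (hb : ∀ p : Fin m × Fin n, p ∈ Ω → F p.1 p.2 = 0)
    (hc : ∀ p : Fin m × Fin n, p ∉ Ω → |F p.1 p.2| < 1) :
    ∀ Z : Matrix (Fin d) (Fin n) ℝ, ∀ S : Matrix (Fin m) (Fin n) ℝ,
      X = A * Z + S → ¬(Z = Apinv * L₀ ∧ S = S₀) →
      nucNorm (Apinv * L₀) + lam * l1Norm S₀ < nucNorm Z + lam * l1Norm S := by
  classical
  intro Z S hfeas hne
  obtain ⟨B₁, hB₁⟩ : ∃ B : Matrix (Fin r_A) (Fin d) ℝ, A = U_A * B :=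
    exists_factor U_A A (le_of_eq hUArange)
  obtain ⟨B₂, hB₂⟩ : ∃ B : Matrix (Fin d) (Fin r_A) ℝ, U_A = A * B :=
    exists_factor A U_A (ge_of_eq hUArange)
  -- A Z₀ = L₀
  obtain ⟨G, hG⟩ : ∃ G, G = U_Aᵀ * L₀ := ⟨_, rfl⟩
  have hUG : U_A * G = L₀ := by rw [hG, ← Matrix.mul_assoc, hcol]
  have key : A * Apinv * (U_A * G) = U_A * G := by
    rw [hB₂]
    simp only [← Matrix.mul_assoc]
    rw [hp1]
  have hAZ₀ : A * (Apinv * L₀) = L₀ := by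
    calc A * (Apinv * L₀) = A * Apinv * (U_A * G) := by rw [hUG, Matrix.mul_assoc]
      _ = U_A * G := key
      _ = L₀ := hUG
  -- H and S
  obtain ⟨H, hH⟩ : ∃ H, H = Z - Apinv * L₀ := ⟨_, rfl⟩
  have hZeq : Z = Apinv * L₀ + H := by rw [hH]; abel
  have hS : S = S₀ - A * H := by
    have h0 : A * Z + S = L₀ + S₀ := by rw [← hfeas, hX]
    have h1 : A * Z = L₀ + A * H := by rw [hZeq, Matrix.mul_add, hAZ₀]
    rw [h1, add_assoc] at h0
    have h2 : A * H + S = S₀ := add_left_cancel h0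
    exact (eq_sub_of_add_eq' h2)
  -- notation
  obtain ⟨Sgn, hSgn⟩ : ∃ Sg, Sg = Matrix.of (fun i j => Real.sign (S₀ i j)) := ⟨_, rfl⟩
  -- nuclear norm value at Z₀
  have hnucZ₀ : nucNorm (Apinv * L₀) = ∑ i, σ i := by
    rw [hSVD]; exact nucNorm_svd U V σ hU hV (fun i => le_of_lt (hσ i))
  -- subgradient step for nuclear norm
  have hVVpsd : (1 - (U * Vᵀ)ᵀ * (U * Vᵀ)).PosSemidef := by
    rw [uvT_mul U V U V 1 hU, Matrix.mul_one]
    exact proj_psd V hV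
  have hipZ₀ : ip (U * Vᵀ) (Apinv * L₀) = ∑ i, σ i := by
    rw [hSVD]; exact ip_svd U V σ hU hV
  have hipH : ip (U * Vᵀ) H = lam * (ip Sgn (A * H) + ip F (A * H)) := by
    rw [ha, ip_smul_left, ip_shift, ← hSgn, ip_add_left]
  have hnuc : (∑ i, σ i) + lam * (ip Sgn (A * H) + ip F (A * H)) ≤ nucNorm Z := by
    have h1 := dual_le (U * Vᵀ) Z hVVpsd
    have h2 : ip (U * Vᵀ) Z = (∑ i, σ i) + lam * (ip Sgn (A * H) + ip F (A * H)) := by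
      conv_lhs => rw [hZeq]
      rw [ip_add_right, hipZ₀, hipH]
    linarith
  -- l1 step
  obtain ⟨T, hT⟩ : ∃ T, T = ∑ p : Fin m × Fin n,
      (if p ∈ Ω then 0 else |(A * H) p.1 p.2|) := ⟨_, rfl⟩
  have hl1 : l1Norm S₀ - ip Sgn (A * H) + T ≤ l1Norm S := by
    rw [hS]
    unfold l1Norm
    rw [l1_prod, l1_prod, hT, ip]
    rw [← Finset.sum_sub_distrib, ← Finset.sum_add_distrib]
    apply Finset.sum_le_sum
    intro p _
    by_cases hp : p ∈ Ω
    · simp only [hp, if_true, add_zero, Matrix.sub_apply]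
      rw [hSgn]
      exact key_entry _ _
    · rw [hSgn]
      simp only [hp, if_false, Matrix.sub_apply, Matrix.of_apply, hS₀supp p hp]
      rw [Real.sign_zero, zero_mul]
      simp
  -- combined core inequality
  have core : nucNorm (Apinv * L₀) + lam * l1Norm S₀ + lam * (ip F (A * H) + T)
      ≤ nucNorm Z + lam * l1Norm S := by
    have h2 : lam * (l1Norm S₀ - ip Sgn (A * H) + T) ≤ lam * l1Norm S :=
      mul_le_mul_of_nonneg_left hl1 (le_of_lt hlam)
    rw [hnucZ₀]
    have e1 : lam * (ip Sgn (A * H) + ip F (A * H))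
        = lam * ip Sgn (A * H) + lam * ip F (A * H) := by ring
    have e2 : lam * (l1Norm S₀ - ip Sgn (A * H) + T)
        = lam * l1Norm S₀ - lam * ip Sgn (A * H) + lam * T := by ring
    have e3 : lam * (ip F (A * H) + T) = lam * ip F (A * H) + lam * T := by ring
    linarith
  -- lower bound on the slack
  have hFT : (∑ p : Fin m × Fin n,
      (if p ∈ Ω then (0:ℝ) else (1 - |F p.1 p.2|) * |(A * H) p.1 p.2|))
      ≤ ip F (A * H) + T := by
    rw [ip, hT, ← Finset.sum_add_distrib]
    apply Finset.sum_le_sum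
    intro p _
    by_cases hp : p ∈ Ω
    · simp only [hp, if_true]
      rw [hb p hp, zero_mul, add_zero]
    · simp only [hp, if_false]
      have h3 : -(|F p.1 p.2| * |(A * H) p.1 p.2|) ≤ F p.1 p.2 * (A * H) p.1 p.2 := by
        rw [← abs_mul]
        exact neg_abs_le _
      have e : (1 - |F p.1 p.2|) * |(A * H) p.1 p.2|
          = |(A * H) p.1 p.2| - |F p.1 p.2| * |(A * H) p.1 p.2| := by ring
      linarith
  have hgnn : ∀ p : Fin m × Fin n,
      0 ≤ (if p ∈ Ω then (0:ℝ) else (1 - |F p.1 p.2|) * |(A * H) p.1 p.2|) := by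
    intro p
    by_cases hp : p ∈ Ω
    · simp [hp]
    · simp only [hp, if_false]
      exact mul_nonneg (by linarith [hc p hp]) (abs_nonneg _)
  by_cases hcase : ∀ p : Fin m × Fin n, p ∉ Ω → (A * H) p.1 p.2 = 0
  · -- A*H vanishes off Ω, hence A*H = 0
    have hUAAH : U_A * U_Aᵀ * (A * H) = A * H := by
      have hUAA : U_A * U_Aᵀ * A = A := by
        rw [hB₁, ← Matrix.mul_assoc, Matrix.mul_assoc U_A U_Aᵀ U_A, hUA, Matrix.mul_one]
      rw [← Matrix.mul_assoc, hUAA]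
    have hAH0 : A * H = 0 := htrans (A * H) hUAAH hcase
    have hSS₀ : S = S₀ := by rw [hS, hAH0, sub_zero]
    have hZne : Z ≠ Apinv * L₀ := fun h => hne ⟨h, hSS₀⟩
    have hHne : H ≠ 0 := by
      intro h
      exact hZne (by rw [hZeq, h, add_zero])
    -- Uᵀ H = 0
    have hPZ₀ : Apinv * A * (Apinv * L₀) = Apinv * L₀ := by
      rw [← Matrix.mul_assoc, hp2]
    have hσinv : Matrix.diagonal σ * Matrix.diagonal (fun i => (σ i)⁻¹) = 1 := by
      rw [Matrix.diagonal_mul_diagonal]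
      have : (fun i => σ i * (σ i)⁻¹) = fun _ => (1:ℝ) := by
        ext i; exact mul_inv_cancel₀ (ne_of_gt (hσ i))
      rw [this, Matrix.diagonal_one]
    have hPU : Apinv * A * U = U := by
      have h1 : Apinv * A * (U * Matrix.diagonal σ * Vᵀ) = U * Matrix.diagonal σ * Vᵀ := by
        rw [← hSVD]; exact hPZ₀
      have h2 : Apinv * A * (U * Matrix.diagonal σ) = U * Matrix.diagonal σ := by
        have h3 := congrArg (fun M => M * V) h1
        rw [Matrix.mul_assoc (U * Matrix.diagonal σ) Vᵀ V, hV, Matrix.mul_one] at h3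
        rw [Matrix.mul_assoc (Apinv * A) (U * Matrix.diagonal σ * Vᵀ) V] at h3
        rw [Matrix.mul_assoc (U * Matrix.diagonal σ) Vᵀ V, hV, Matrix.mul_one] at h3
        exact h3
      have h4 := congrArg (fun M => M * Matrix.diagonal (fun i => (σ i)⁻¹)) h2
      rw [Matrix.mul_assoc U (Matrix.diagonal σ) (Matrix.diagonal fun i => (σ i)⁻¹),
        hσinv, Matrix.mul_one] at h4
      rw [Matrix.mul_assoc (Apinv * A) (U * Matrix.diagonal σ)
        (Matrix.diagonal fun i => (σ i)⁻¹)] at h4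
      rw [Matrix.mul_assoc U (Matrix.diagonal σ) (Matrix.diagonal fun i => (σ i)⁻¹),
        hσinv, Matrix.mul_one] at h4
      exact h4
    have hUtH : Uᵀ * H = 0 := by
      calc Uᵀ * H = (Apinv * A * U)ᵀ * H := by rw [hPU]
        _ = Uᵀ * ((Apinv * A)ᵀ * H) := by
            rw [Matrix.transpose_mul, Matrix.mul_assoc]
        _ = Uᵀ * (Apinv * (A * H)) := by rw [hp4, Matrix.mul_assoc]
        _ = 0 := by rw [hAH0, Matrix.mul_zero, Matrix.mul_zero]
    -- SVD of H
    obtain ⟨r₂, U₂, V₂, σ₂, hσ₂pos, hU₂, hV₂, hH₂, C, hC⟩ := exists_svd H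
    have hUtU₂ : Uᵀ * U₂ = 0 := by
      rw [hC, ← Matrix.mul_assoc, hUtH, Matrix.zero_mul]
    have hU₂tU : U₂ᵀ * U = 0 := by
      have := congrArg Matrix.transpose hUtU₂
      simpa using this
    obtain ⟨x, hx'⟩ : ∃ x, x = ∑ i, σ i := ⟨_, rfl⟩
    obtain ⟨y, hy'⟩ : ∃ y, y = ∑ k, σ₂ k := ⟨_, rfl⟩
    have hx : 0 ≤ x := hx' ▸ Finset.sum_nonneg (fun i _ => le_of_lt (hσ i))
    have hy : 0 < y := by
      rw [hy']
      rcases Nat.eq_zero_or_pos r₂ with h0 | hpos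
      · exfalso
        apply hHne
        rw [hH₂]
        subst h0
        ext a b
        rw [Matrix.mul_apply]
        simp
      · exact Finset.sum_pos (fun k _ => hσ₂pos k) ⟨⟨0, hpos⟩, Finset.mem_univ _⟩
    obtain ⟨s, hs'⟩ : ∃ s, s = Real.sqrt (x ^ 2 + y ^ 2) := ⟨_, rfl⟩
    have hs : 0 < s := by
      rw [hs']
      exact Real.sqrt_pos.mpr (add_pos_of_nonneg_of_pos (sq_nonneg x) (pow_pos hy 2))
    have hs2 : s ^ 2 = x ^ 2 + y ^ 2 := by
      rw [hs']
      exact Real.sq_sqrt (by positivity)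
    obtain ⟨a, ha'⟩ : ∃ a, a = x / s := ⟨_, rfl⟩
    obtain ⟨b, hb'⟩ : ∃ b, b = y / s := ⟨_, rfl⟩
    have hab : a ^ 2 + b ^ 2 = 1 := by
      rw [ha', hb', div_pow, div_pow, ← add_div, ← hs2, div_self]
      exact pow_ne_zero 2 (ne_of_gt hs)
    obtain ⟨Y, hY⟩ : ∃ Y, Y = a • (U * Vᵀ) + b • (U₂ * V₂ᵀ) := ⟨_, rfl⟩
    have hYY : Yᵀ * Y = (a ^ 2) • (V * Vᵀ) + (b ^ 2) • (V₂ * V₂ᵀ) := by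
      rw [hY]
      simp only [Matrix.transpose_add, Matrix.transpose_smul, Matrix.add_mul, Matrix.mul_add,
        Matrix.smul_mul, Matrix.mul_smul, smul_smul]
      rw [uvT_mul U V U V 1 hU, uvT_mul U V U₂ V₂ 0 hUtU₂,
        uvT_mul U₂ V₂ U V 0 hU₂tU, uvT_mul U₂ V₂ U₂ V₂ 1 hU₂]
      simp only [Matrix.mul_one, Matrix.mul_zero, Matrix.zero_mul, smul_zero, add_zero,
        zero_add]
      rw [smul_smul, smul_smul, ← sq, ← sq]
    have hYpsd : (1 - Yᵀ * Y).PosSemidef := by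
      rw [hYY]
      have hone : (1 : Matrix (Fin n) (Fin n) ℝ)
          = a ^ 2 • (1 : Matrix (Fin n) (Fin n) ℝ) + b ^ 2 • 1 := by
        rw [← add_smul, hab, one_smul]
      have hsplit : (1 : Matrix (Fin n) (Fin n) ℝ)
          - ((a ^ 2) • (V * Vᵀ) + (b ^ 2) • (V₂ * V₂ᵀ))
          = a ^ 2 • (1 - V * Vᵀ) + b ^ 2 • (1 - V₂ * V₂ᵀ) := by
        rw [smul_sub, smul_sub]
        conv_lhs => rw [hone]
        abel
      rw [hsplit]
      exact Matrix.PosSemidef.add (psd_smul (sq_nonneg a) (proj_psd V hV))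
        (psd_smul (sq_nonneg b) (proj_psd V₂ hV₂))
    have hipY : ip Y Z = a * x + b * y := by
      have e1 : ip (U * Vᵀ) Z = x := by
        rw [hZeq, ip_add_right, hipZ₀, ← hx']
        have : ip (U * Vᵀ) H = 0 := by
          rw [ip_factored, hUtH, Matrix.zero_mul, Matrix.trace_zero]
        rw [this, add_zero]
      have e2 : ip (U₂ * V₂ᵀ) Z = y := by
        rw [hZeq, ip_add_right]
        have e3 : ip (U₂ * V₂ᵀ) (Apinv * L₀) = 0 := by
          rw [hSVD, ip_factored]
          have : U₂ᵀ * (U * Matrix.diagonal σ * Vᵀ) * V₂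
              = U₂ᵀ * U * (Matrix.diagonal σ * (Vᵀ * V₂)) := by simp only [Matrix.mul_assoc]
          rw [this, hU₂tU, Matrix.zero_mul, Matrix.trace_zero]
        have e4 : ip (U₂ * V₂ᵀ) H = y := by
          rw [hH₂, ip_svd U₂ V₂ σ₂ hU₂ hV₂, hy']
        rw [e3, e4, zero_add]
      rw [hY, ip_add_left, ip_smul_left, ip_smul_left, e1, e2]
    have hdual := dual_le Y Z hYpsd
    rw [hipY] at hdual
    have hval : a * x + b * y = s := by
      rw [ha', hb']
      have e : x / s * x + y / s * y = (x ^ 2 + y ^ 2) / s := by ring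
      rw [e, ← hs2, sq, mul_div_assoc, div_self (ne_of_gt hs), mul_one]
    have hxlt : x < s := lt_sqrt_aux hx hy hs hs2
    rw [hnucZ₀, hSS₀, ← hx']
    have hfin : x < nucNorm Z := lt_of_lt_of_le hxlt (hval ▸ hdual)
    exact add_lt_add_left hfin _
  · -- strict slack from the l1 part
    push_neg at hcase
    obtain ⟨p₀, hp₀, hne0⟩ := hcase
    have hpos : 0 < ∑ p : Fin m × Fin n,
        (if p ∈ Ω then (0:ℝ) else (1 - |F p.1 p.2|) * |(A * H) p.1 p.2|) := by
      apply Finset.sum_pos' (fun p _ => hgnn p)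
      refine ⟨p₀, Finset.mem_univ _, ?_⟩
      simp only [hp₀, if_false]
      exact mul_pos (by linarith [hc p₀ hp₀]) (abs_pos.mpr hne0)
    have hslack : 0 < lam * (ip F (A * H) + T) :=
      mul_pos hlam (lt_of_lt_of_le hpos hFT)
    linarith [core]
end

section
/- Let N_L ∈ ℝ^{m×n} lie in the range of P_{U_A} (i.e., P_{U_A}(N_L) = N_L), and suppose ‖P_{U_A}P_Ω‖ < 1, so that P = I + Σ_{i=1}^∞ (P_{U_A}P_ΩP_{U_A})^i is well-defined with ‖P‖ ≤ 1/(1−‖P_{U_A}P_Ω‖²). Then N_L = P ∘ P_{U_A} ∘ P_{Ω^⊥}(N_L), and consequently ‖N_L‖_F ≤ ‖P‖ · ‖P_{Ω^⊥}(N_L)‖_F. -/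
open Matrix
open scoped Classical
open scoped RealInnerProductSpace

variable {m n r : ℕ}

/-- The Hilbert space of `m × n` real matrices equipped with the Frobenius inner product,
realized as a Euclidean space indexed by matrix positions. -/
abbrev MatHilb (m n : ℕ) := EuclideanSpace ℝ (Fin m × Fin n)

/-- Coordinate projection `P_Ω` onto the matrices supported on `Ω`. -/
noncomputable def projSupp (Ω : Set (Fin m × Fin n)) : MatHilb m n →L[ℝ] MatHilb m n :=
  LinearMap.toContinuousLinearMap
    { toFun := fun x => (WithLp.toLp 2 (fun p => if p ∈ Ω then x p else 0) : MatHilb m n)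
      map_add' := by
        intro x y; ext p
        by_cases h : p ∈ Ω <;> simp [h, PiLp.add_apply]
      map_smul' := by
        intro c x; ext p
        by_cases h : p ∈ Ω <;> simp [h, PiLp.smul_apply] }

/-- The projection `P_U : M ↦ U Uᵀ M` onto the set of matrices whose columns lie in the
column space of `U`. -/
noncomputable def projColSp (U : Matrix (Fin m) (Fin r) ℝ) :
    MatHilb m n →L[ℝ] MatHilb m n :=
  LinearMap.toContinuousLinearMap
    { toFun := fun x => (WithLp.toLp 2 (fun p : Fin m × Fin n => ∑ a, (U * Uᵀ) p.1 a * x (a, p.2)) : MatHilb m n)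
      map_add' := by
        intro x y; ext p
        simp [PiLp.add_apply, mul_add, Finset.sum_add_distrib]
      map_smul' := by
        intro c x; ext p
        simp [PiLp.smul_apply, Finset.mul_sum]
        exact Finset.sum_congr rfl fun a _ => by ring }

lemma projSupp_apply (Ω : Set (Fin m × Fin n)) (x : MatHilb m n) (p : Fin m × Fin n) :
    projSupp Ω x p = if p ∈ Ω then x p else 0 := rfl

lemma projColSp_apply (U : Matrix (Fin m) (Fin r) ℝ) (x : MatHilb m n) (p : Fin m × Fin n) :
    projColSp U x p = ∑ a, (U * Uᵀ) p.1 a * x (a, p.2) := rfl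

lemma UUt_symm (U : Matrix (Fin m) (Fin r) ℝ) (i a : Fin m) :
    (U * Uᵀ) i a = (U * Uᵀ) a i := by
  simp [Matrix.mul_apply, Matrix.transpose_apply, mul_comm]

lemma adjoint_projSupp (Ω : Set (Fin m × Fin n)) :
    ContinuousLinearMap.adjoint (projSupp (m := m) (n := n) Ω) = projSupp Ω := by
  symm
  rw [ContinuousLinearMap.eq_adjoint_iff]
  intro x y
  simp only [PiLp.inner_apply, RCLike.inner_apply, conj_trivial, projSupp_apply]
  refine Finset.sum_congr rfl fun p _ => ?_
  by_cases h : p ∈ Ω <;> simp [h]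

lemma adjoint_projColSp (U : Matrix (Fin m) (Fin r) ℝ) :
    ContinuousLinearMap.adjoint (projColSp (n := n) U) = projColSp U := by
  have key : ∀ x y : MatHilb m n, ⟪projColSp U x, y⟫ =
      ∑ i, ∑ a, ∑ j, (U * Uᵀ) i a * x (a, j) * y (i, j) := by
    intro x y
    simp only [PiLp.inner_apply, RCLike.inner_apply, conj_trivial, projColSp_apply]
    rw [Fintype.sum_prod_type]
    refine Finset.sum_congr rfl fun i _ => ?_
    rw [Finset.sum_comm]
    refine Finset.sum_congr rfl fun a _ => ?_
    simp [Finset.sum_mul]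
    rw [Finset.mul_sum]; exact Finset.sum_congr rfl fun _ _ => by ring
  symm
  rw [ContinuousLinearMap.eq_adjoint_iff]
  intro x y
  rw [key, real_inner_comm, key]
  rw [Finset.sum_comm]
  refine Finset.sum_congr rfl fun i _ => ?_
  refine Finset.sum_congr rfl fun a _ => ?_
  refine Finset.sum_congr rfl fun j _ => ?_
  rw [UUt_symm]
  ring

lemma projColSp_comp (U : Matrix (Fin m) (Fin r) ℝ) (hU : Uᵀ * U = 1) (x : MatHilb m n) :
    projColSp U (projColSp U x) = projColSp U x := by
  ext p
  simp only [projColSp_apply]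
  have : ∀ b, ∑ a, (U * Uᵀ) p.1 a * (U * Uᵀ) a b = (U * Uᵀ) p.1 b := by
    intro b
    have h : (U * Uᵀ) * (U * Uᵀ) = U * Uᵀ := by
      rw [Matrix.mul_assoc, ← Matrix.mul_assoc Uᵀ, hU, Matrix.one_mul]
    have := congrArg (fun M => M p.1 b) h
    simpa [Matrix.mul_apply] using this
  calc ∑ a, (U * Uᵀ) p.1 a * ∑ b, (U * Uᵀ) a b * x (b, p.2)
      = ∑ a, ∑ b, (U * Uᵀ) p.1 a * (U * Uᵀ) a b * x (b, p.2) := by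
        simp [Finset.mul_sum, mul_assoc]
    _ = ∑ b, (∑ a, (U * Uᵀ) p.1 a * (U * Uᵀ) a b) * x (b, p.2) := by
        rw [Finset.sum_comm]; simp [Finset.sum_mul]
    _ = ∑ b, (U * Uᵀ) p.1 b * x (b, p.2) := by simp [this]

lemma projSupp_comp (Ω : Set (Fin m × Fin n)) (x : MatHilb m n) :
    projSupp Ω (projSupp Ω x) = projSupp Ω x := by
  ext p
  by_cases h : p ∈ Ω <;> simp [projSupp_apply, h]

lemma projSupp_add_compl (Ω : Set (Fin m × Fin n)) (x : MatHilb m n) :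
    projSupp Ω x + projSupp Ωᶜ x = x := by
  ext p
  by_cases h : p ∈ Ω <;> simp [PiLp.add_apply, projSupp_apply, h]

lemma norm_projColSp_le (U : Matrix (Fin m) (Fin r) ℝ) (hU : Uᵀ * U = 1) (x : MatHilb m n) :
    ‖projColSp U x‖ ≤ ‖x‖ := by
  have hsq : ‖projColSp U x‖ ^ 2 ≤ ‖x‖ * ‖projColSp U x‖ := by
    have h1 : (‖projColSp U x‖ : ℝ) ^ 2 = ⟪projColSp U x, projColSp U x⟫ := by
      exact (real_inner_self_eq_norm_sq _).symm
    have h2 := ContinuousLinearMap.adjoint_inner_left (𝕜 := ℝ)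
      (projColSp (n := n) U) x (projColSp U x)
    rw [adjoint_projColSp] at h2
    rw [h1, ← h2, projColSp_comp U hU]
    exact (real_inner_le_norm _ _).trans (le_of_eq (mul_comm _ _))
  rcases eq_or_lt_of_le (norm_nonneg (projColSp U x)) with h0 | h0
  · rw [← h0]; exact norm_nonneg x
  · nlinarith [hsq]

/-- If `N_L` lies in the range of `P_U` and `‖P_U P_Ω‖ < 1`, then with
`P = I + ∑_{i≥1} (P_U P_Ω P_U)^i` (which satisfies `‖P‖ ≤ 1/(1 − ‖P_U P_Ω‖²)`) one has
`N_L = P (P_U (P_{Ω^⊥} N_L))`, and consequently `‖N_L‖_F ≤ ‖P‖ ‖P_{Ω^⊥} N_L‖_F`. -/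
theorem mem_range_proj_controlled_by_complement (m n r : ℕ)
    (U : Matrix (Fin m) (Fin r) ℝ) (hU : Uᵀ * U = 1)
    (Ω : Set (Fin m × Fin n))
    (hnorm : ‖(projColSp U : MatHilb m n →L[ℝ] MatHilb m n) ∘L projSupp Ω‖ < 1)
    (NL : MatHilb m n) (hNL : projColSp U NL = NL)
    (P : MatHilb m n →L[ℝ] MatHilb m n)
    (hP : P = 1 + ∑' i : ℕ,
        ((projColSp U : MatHilb m n →L[ℝ] MatHilb m n) ∘L projSupp Ω ∘L
          projColSp U) ^ (i + 1)) :
    ‖P‖ ≤ 1 / (1 - ‖(projColSp U : MatHilb m n →L[ℝ] MatHilb m n) ∘L projSupp Ω‖ ^ 2) ∧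
    NL = P (projColSp U (projSupp Ωᶜ NL)) ∧
    ‖NL‖ ≤ ‖P‖ * ‖projSupp Ωᶜ NL‖ := by
  set PU : MatHilb m n →L[ℝ] MatHilb m n := projColSp U with hPUdef
  set PΩ : MatHilb m n →L[ℝ] MatHilb m n := projSupp Ω with hPOdef
  set Q : MatHilb m n →L[ℝ] MatHilb m n := PU ∘L PΩ with hQdef
  set T : MatHilb m n →L[ℝ] MatHilb m n := PU ∘L PΩ ∘L PU with hTdef
  -- ‖P_Ω ∘ P_U‖ = ‖Q‖ via adjoints
  have hadjQ : ContinuousLinearMap.adjoint Q = PΩ ∘L PU := by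
    rw [hQdef, ContinuousLinearMap.adjoint_comp, adjoint_projSupp, adjoint_projColSp]
  have hRnorm : ‖PΩ ∘L PU‖ = ‖Q‖ := by
    rw [← hadjQ]
    exact ContinuousLinearMap.adjoint.norm_map Q
  have hTfact : T = Q ∘L (PΩ ∘L PU) := by
    ext x
    simp only [hTdef, hQdef, ContinuousLinearMap.comp_apply]
    rw [projSupp_comp]
  have hTle : ‖T‖ ≤ ‖Q‖ ^ 2 := by
    calc ‖T‖ ≤ ‖Q‖ * ‖PΩ ∘L PU‖ := by rw [hTfact]; exact ContinuousLinearMap.opNorm_comp_le _ _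
      _ = ‖Q‖ ^ 2 := by rw [hRnorm]; ring
  have hQ0 : (0 : ℝ) ≤ ‖Q‖ := norm_nonneg _
  have hQsq : ‖Q‖ ^ 2 < 1 := by nlinarith
  have hT1 : ‖T‖ < 1 := lt_of_le_of_lt hTle hQsq
  have hPsum : P = ∑' i : ℕ, T ^ i := by
    rw [hP, geom_series_succ T hT1]
    abel
  -- norm bound
  have hbound : ‖P‖ ≤ 1 / (1 - ‖Q‖ ^ 2) := by
    have h1 : ‖P‖ ≤ ‖(1 : MatHilb m n →L[ℝ] MatHilb m n)‖ - 1 + (1 - ‖T‖)⁻¹ := by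
      rw [hPsum]; exact tsum_geometric_le_of_norm_lt_one T hT1
    have hone : ‖(1 : MatHilb m n →L[ℝ] MatHilb m n)‖ ≤ 1 := by
      rw [ContinuousLinearMap.one_def]; exact ContinuousLinearMap.norm_id_le
    have hpos : (0 : ℝ) < 1 - ‖Q‖ ^ 2 := by linarith
    have hmono : (1 - ‖T‖)⁻¹ ≤ (1 - ‖Q‖ ^ 2)⁻¹ := by
      apply inv_anti₀ hpos
      linarith
    rw [one_div]
    linarith
  -- key identity
  have hc : projSupp Ωᶜ NL = NL - PΩ NL :=
    eq_sub_of_add_eq' (projSupp_add_compl Ω NL)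
  have hkey : PU (projSupp Ωᶜ NL) = NL - T NL := by
    rw [hc, map_sub, hNL]
    congr 1
    simp only [hTdef, ContinuousLinearMap.comp_apply]
    rw [hNL]
  have hPmul : P * (1 - T) = 1 := by
    rw [hPsum]; exact geom_series_mul_neg T hT1
  have hid : NL = P (PU (projSupp Ωᶜ NL)) := by
    rw [hkey]
    have : NL - T NL = (1 - T) NL := by
      simp [ContinuousLinearMap.sub_apply]
    rw [this, ← ContinuousLinearMap.comp_apply, ← ContinuousLinearMap.mul_def, hPmul,
      ContinuousLinearMap.one_apply]
  refine ⟨hbound, hid, ?_⟩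
  calc ‖NL‖ = ‖P (PU (projSupp Ωᶜ NL))‖ := by rw [← hid]
    _ ≤ ‖P‖ * ‖PU (projSupp Ωᶜ NL)‖ := P.le_opNorm _
    _ ≤ ‖P‖ * ‖projSupp Ωᶜ NL‖ := by
        exact mul_le_mul_of_nonneg_left (norm_projColSp_le U hU _) (norm_nonneg P)
end
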